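/- Let k=2^n and π_n the bit-reversal permutation. Then J_1(k) = ∑_{j=0}^{k−1} j·π_n(j) = k³/4 + (n−4)k²/8 + k/4. -/

import Mathlib

/-- The bit-reversal permutation on `n` bits: reverses the binary digits of `j`. -/
def bitrev (n j : ℕ) : ℕ := ∑ i ∈ Finset.range n, (j / 2 ^ i % 2) * 2 ^ (n - 1 - i)

lemma sum_range_two_mul (m : ℕ) (f : ℕ → ℕ) :
    ∑ j ∈ Finset.range (2 * m), f j = ∑ q ∈ Finset.range m, (f (2 * q) + f (2 * q + 1)) := by
  induction m with
  | zero => simp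
  | succ m ih =>
    have h2 : 2 * (m + 1) = (2 * m + 1) + 1 := by ring
    rw [h2, Finset.sum_range_succ, Finset.sum_range_succ, ih, Finset.sum_range_succ, add_assoc]

lemma bitrev_succ (n j : ℕ) : bitrev (n + 1) j = (j % 2) * 2 ^ n + bitrev n (j / 2) := by
  unfold bitrev
  rw [Finset.sum_range_succ']
  have h0 : j / 2 ^ 0 % 2 * 2 ^ (n + 1 - 1 - 0) = j % 2 * 2 ^ n := by simp
  rw [h0, add_comm]
  congr 1
  apply Finset.sum_congr rfl
  intro i _
  congr 1
  · rw [Nat.div_div_eq_div_mul]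
    ring_nf
  · congr 1
    omega

lemma bitrev_even (n q : ℕ) : bitrev (n + 1) (2 * q) = bitrev n q := by
  rw [bitrev_succ]
  simp [Nat.mul_div_cancel_left]

lemma bitrev_odd (n q : ℕ) : bitrev (n + 1) (2 * q + 1) = 2 ^ n + bitrev n q := by
  rw [bitrev_succ]
  have h1 : (2 * q + 1) % 2 = 1 := by omega
  have h2 : (2 * q + 1) / 2 = q := by omega
  rw [h1, h2, one_mul]

lemma sum_odd_real (m : ℕ) : ∑ q ∈ Finset.range m, ((2 * q + 1 : ℕ) : ℝ) = (m : ℝ) ^ 2 := by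
  induction m with
  | zero => simp
  | succ m ih =>
    rw [Finset.sum_range_succ, ih]
    push_cast
    ring

lemma T_lem (n : ℕ) :
    ((∑ j ∈ Finset.range (2 ^ n), bitrev n j : ℕ) : ℝ)
      = ((2 : ℝ) ^ n) ^ 2 / 2 - (2 : ℝ) ^ n / 2 := by
  induction n with
  | zero => simp [bitrev]
  | succ n ih =>
    have h2 : (2 : ℕ) ^ (n + 1) = 2 * 2 ^ n := by ring
    rw [h2, sum_range_two_mul]
    have : ∀ q ∈ Finset.range (2 ^ n),
        bitrev (n + 1) (2 * q) + bitrev (n + 1) (2 * q + 1)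
          = 2 ^ n + 2 * bitrev n q := by
      intro q _
      rw [bitrev_even, bitrev_odd]
      ring
    rw [Finset.sum_congr rfl this, Finset.sum_add_distrib, Finset.sum_const,
      Finset.card_range]
    simp only [smul_eq_mul]
    push_cast at ih ⊢
    rw [← Finset.mul_sum, ih]
    ring

lemma S_lem (n : ℕ) :
    ((∑ j ∈ Finset.range (2 ^ n), j * bitrev n j : ℕ) : ℝ)
      = ((2 : ℝ) ^ n) ^ 3 / 4 + ((n : ℝ) - 4) * ((2 : ℝ) ^ n) ^ 2 / 8 + (2 : ℝ) ^ n / 4 := by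
  induction n with
  | zero => norm_num [bitrev]
  | succ n ih =>
    have h2 : (2 : ℕ) ^ (n + 1) = 2 * 2 ^ n := by ring
    rw [h2, sum_range_two_mul]
    have : ∀ q ∈ Finset.range (2 ^ n),
        2 * q * bitrev (n + 1) (2 * q) + (2 * q + 1) * bitrev (n + 1) (2 * q + 1)
          = 4 * (q * bitrev n q) + bitrev n q + (2 * q + 1) * 2 ^ n := by
      intro q _
      rw [bitrev_even, bitrev_odd]
      ring
    rw [Finset.sum_congr rfl this, Finset.sum_add_distrib, Finset.sum_add_distrib]
    have hT := T_lem n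
    have hO := sum_odd_real (2 ^ n)
    push_cast at ih hT hO ⊢
    rw [← Finset.mul_sum, ← Finset.sum_mul, hO]
    have e1 : ∑ q ∈ Finset.range (2 ^ n), (q : ℝ) * (bitrev n q : ℝ)
        = ((2 : ℝ) ^ n) ^ 3 / 4 + ((n : ℝ) - 4) * ((2 : ℝ) ^ n) ^ 2 / 8 + (2 : ℝ) ^ n / 4 := ih
    have e2 : ∑ q ∈ Finset.range (2 ^ n), (bitrev n q : ℝ)
        = ((2 : ℝ) ^ n) ^ 2 / 2 - (2 : ℝ) ^ n / 2 := hT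
    rw [e1, e2]
    ring

theorem J1_bitrev (n k : ℕ) (hk : k = 2 ^ n) :
    ((∑ j ∈ Finset.range k, j * bitrev n j : ℕ) : ℝ)
      = (k : ℝ) ^ 3 / 4 + ((n : ℝ) - 4) * (k : ℝ) ^ 2 / 8 + (k : ℝ) / 4 := by
  subst hk
  have := S_lem n
  push_cast at this ⊢
  linarith [this]
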